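/- Let F be a field and A = F[T] the polynomial ring over F. Let i₁, i₂ ∈ A be nonzero polynomials with i₂ ∣ i₁, and set χ = i₁·i₂. Let M be a 2×2 matrix with entries in A/(χ) such that M fixes the two vectors v₁ = (i₁ mod χ, 0) and v₂ = (0, i₂ mod χ), i.e. M·v₁ = v₁ and M·v₂ = v₂. If c ∈ A is a polynomial whose residue class modulo χ equals the trace of M, then i₂ divides c − 2 in A. -/
import Mathlib


open Polynomial

/-- Proposition 2.2 (algebraic core): if a 2×2 matrix over `F[T]/(χ)`, `χ = i₁·i₂`,
fixes the vectors `(i₁ mod χ, 0)` and `(0, i₂ mod χ)`, and `c` lifts its trace,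
then `i₂ ∣ c - 2`. -/
theorem stmt_0 (F : Type*) [Field F]
    (i₁ i₂ : F[X]) (hi₁ : i₁ ≠ 0) (hi₂ : i₂ ≠ 0) (hdvd : i₂ ∣ i₁)
    (χ : F[X]) (hχ : χ = i₁ * i₂)
    (M : Matrix (Fin 2) (Fin 2) (F[X] ⧸ Ideal.span {χ}))
    (hv₁ : M.mulVec ![Ideal.Quotient.mk (Ideal.span {χ}) i₁, 0]
        = ![Ideal.Quotient.mk (Ideal.span {χ}) i₁, 0])
    (hv₂ : M.mulVec ![0, Ideal.Quotient.mk (Ideal.span {χ}) i₂]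
        = ![0, Ideal.Quotient.mk (Ideal.span {χ}) i₂])
    (c : F[X]) (hc : Ideal.Quotient.mk (Ideal.span {χ}) c = M.trace) :
    i₂ ∣ c - 2 := by
  obtain ⟨a, ha⟩ := Ideal.Quotient.mk_surjective (I := Ideal.span {χ}) (M 0 0)
  obtain ⟨d, hd⟩ := Ideal.Quotient.mk_surjective (I := Ideal.span {χ}) (M 1 1)
  have h00 : M 0 0 * Ideal.Quotient.mk (Ideal.span {χ}) i₁ = Ideal.Quotient.mk (Ideal.span {χ}) i₁ := by
    have := congrFun hv₁ 0
    simpa [Matrix.mulVec, dotProduct, Fin.sum_univ_two] using this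
  have h11 : M 1 1 * Ideal.Quotient.mk (Ideal.span {χ}) i₂ = Ideal.Quotient.mk (Ideal.span {χ}) i₂ := by
    have := congrFun hv₂ 1
    simpa [Matrix.mulVec, dotProduct, Fin.sum_univ_two] using this
  have key : ∀ p q : F[X], Ideal.Quotient.mk (Ideal.span {χ}) p = Ideal.Quotient.mk (Ideal.span {χ}) q → χ ∣ p - q := by
    intro p q h
    have := Ideal.Quotient.eq.mp h
    simpa [Ideal.mem_span_singleton] using this
  have h1 : χ ∣ a * i₁ - i₁ := by
    apply key
    rw [map_mul, ha, h00]
  have h2 : χ ∣ d * i₂ - i₂ := by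
    apply key
    rw [map_mul, hd, h11]
  have htr : M.trace = M 0 0 + M 1 1 := by
    simp [Matrix.trace, Fin.sum_univ_two, Matrix.diag]
  have h3 : χ ∣ c - (a + d) := by
    apply key
    rw [hc, htr, map_add, ha, hd]
  have ha1 : i₂ ∣ a - 1 := by
    have : i₁ * i₂ ∣ (a - 1) * i₁ := by
      rw [← hχ]; convert h1 using 1; ring
    rw [mul_comm (a-1) i₁] at this
    exact (mul_dvd_mul_iff_left hi₁).mp this
  have hd1 : i₂ ∣ d - 1 := by
    have h4 : i₁ * i₂ ∣ (d - 1) * i₂ := by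
      rw [← hχ]; convert h2 using 1; ring
    have : i₁ ∣ d - 1 := by
      have := (mul_dvd_mul_iff_right hi₂).mp h4
      exact this
    exact hdvd.trans this
  have hχdvd : i₂ ∣ c - (a + d) := dvd_trans ⟨i₁, by rw [hχ]; ring⟩ h3
  have : c - 2 = (c - (a + d)) + (a - 1) + (d - 1) := by ring
  rw [this]
  exact dvd_add (dvd_add hχdvd ha1) hd1
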